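/- Partitions (λ_1,...,λ_k) of n satisfying λ_i ≥ λ_{i+1} + λ_{i+2} + λ_{i+3} + ... (i.e. λ_i ≥ Σ_{j>i} λ_j) for all 1 ≤ i ≤ k are in bijection with partitions of n into parts from {1, 2, 4, ..., 2^{k-1}} (powers of 2 up to 2^{k-1}). Moreover the two-variable refinement holds: the generating function tracking odd-indexed weight by x and even-indexed weight by y is Π_{i=1}^k (1 - x^{o_i} y^{e_i})^{-1} where o_1 = o_2 = 1, o_i = o_{i-1} + 2o_{i-2} for i > 2, e_1 = 0, e_2 = 1, and e_i = o_{i-1} for i > 2. -/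

import Mathlib

/-- `o₁ = o₂ = 1`, `oᵢ = o_{i-1} + 2 o_{i-2}` (zero-indexed). -/
def oseq : ℕ → ℕ
  | 0 => 1
  | 1 => 1
  | n + 2 => oseq (n + 1) + 2 * oseq n

/-- `e₁ = 0`, `e₂ = 1`, `eᵢ = o_{i-1}` (zero-indexed). -/
def eseq : ℕ → ℕ
  | 0 => 0
  | 1 => 1
  | n + 2 => oseq (n + 1)

namespace Stmt18

/-- partial weighted tail sum -/
def T (k : ℕ) (a : ℕ → ℕ) (i : ℕ) : ℕ := ∑ j ∈ Finset.Ico i k, 2 ^ (j - i) * a j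

def lamOf (k : ℕ) (a : ℕ → ℕ) (i : ℕ) : ℕ := if i < k then a i + T k a (i + 1) else 0

def aOf (k : ℕ) (lam : ℕ → ℕ) (i : ℕ) : ℕ := lam i - ∑ j ∈ Finset.Ico (i + 1) k, lam j

lemma T_succ (k : ℕ) (a : ℕ → ℕ) {i : ℕ} (h : i < k) :
    T k a i = a i + 2 * T k a (i + 1) := by
  unfold T
  rw [Finset.sum_eq_sum_Ico_succ_bot h, Finset.mul_sum]
  simp only [Nat.sub_self, pow_zero, one_mul]
  congr 1
  refine Finset.sum_congr rfl fun j hj => ?_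
  obtain ⟨h1, h2⟩ := Finset.mem_Ico.mp hj
  have hji : j - i = (j - (i + 1)) + 1 := by omega
  rw [hji, pow_succ]
  ring

lemma sum_lamOf (k : ℕ) (a : ℕ → ℕ) :
    ∀ d i, i ≤ k → k - i = d → ∑ j ∈ Finset.Ico i k, lamOf k a j = T k a i := by
  intro d
  induction d with
  | zero =>
    intro i h1 h2
    have : i = k := by omega
    subst this
    simp [T]
  | succ d ih =>
    intro i h1 h2
    have hik : i < k := by omega
    rw [Finset.sum_eq_sum_Ico_succ_bot hik, ih (i + 1) (by omega) (by omega),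
      T_succ k a hik]
    simp [lamOf, hik]
    ring

end Stmt18

namespace Stmt18

lemma lamOf_superincr (k : ℕ) (a : ℕ → ℕ) {i : ℕ} (h : i < k) :
    ∑ j ∈ Finset.Ico (i + 1) k, lamOf k a j ≤ lamOf k a i := by
  rw [sum_lamOf k a (k - (i + 1)) (i + 1) (by omega) rfl]
  simp [lamOf, h]

lemma aOf_lamOf (k : ℕ) (a : ℕ → ℕ) (ha : ∀ j, k ≤ j → a j = 0) :
    aOf k (lamOf k a) = a := by
  funext i
  unfold aOf
  by_cases h : i < k
  · rw [sum_lamOf k a (k - (i + 1)) (i + 1) (by omega) rfl]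
    simp [lamOf, h]
  · have h1 : lamOf k a i = 0 := by simp [lamOf, h]
    have h2 : a i = 0 := ha i (by omega)
    omega

lemma T_aOf (k : ℕ) (lam : ℕ → ℕ)
    (hs : ∀ i < k, ∑ j ∈ Finset.Ico (i + 1) k, lam j ≤ lam i) :
    ∀ d i, i ≤ k → k - i = d → T k (aOf k lam) i = ∑ j ∈ Finset.Ico i k, lam j := by
  intro d
  induction d with
  | zero =>
    intro i h1 h2
    have : i = k := by omega
    subst this
    simp [T]
  | succ d ih =>
    intro i h1 h2
    have hik : i < k := by omega
    rw [T_succ k _ hik, ih (i + 1) (by omega) (by omega),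
      Finset.sum_eq_sum_Ico_succ_bot hik]
    have hle := hs i hik
    unfold aOf
    omega

lemma lamOf_aOf (k : ℕ) (lam : ℕ → ℕ) (h0 : ∀ j, k ≤ j → lam j = 0)
    (hs : ∀ i < k, ∑ j ∈ Finset.Ico (i + 1) k, lam j ≤ lam i) :
    lamOf k (aOf k lam) = lam := by
  funext i
  by_cases h : i < k
  · have := T_aOf k lam hs (k - (i + 1)) (i + 1) (by omega) rfl
    have hle := hs i h
    simp only [lamOf, h, if_true, this]
    unfold aOf
    omega
  · simp [lamOf, h, h0 i (by omega)]

end Stmt18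

namespace Stmt18

/-- coefficient of `a i` when weighting `lam j` by `w j` -/
def Wc (w : ℕ → ℕ) (i : ℕ) : ℕ := w i + ∑ j ∈ Finset.range i, w j * 2 ^ (i - j - 1)

lemma weighted_sum (k : ℕ) (w a : ℕ → ℕ) :
    ∑ j ∈ Finset.range k, w j * lamOf k a j
      = ∑ i ∈ Finset.range k, Wc w i * a i := by
  have hlam : ∀ j ∈ Finset.range k, w j * lamOf k a j
      = w j * a j + ∑ i ∈ Finset.Ico (j + 1) k, w j * 2 ^ (i - j - 1) * a i := by
    intro j hj
    rw [Finset.mem_range] at hj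
    simp only [lamOf, hj, if_true, T, Nat.mul_add, Finset.mul_sum]
    congr 1
    refine Finset.sum_congr rfl fun i hi => ?_
    rw [Finset.mem_Ico] at hi
    have : i - (j + 1) = i - j - 1 := by omega
    rw [this, mul_assoc]
  rw [Finset.sum_congr rfl hlam, Finset.sum_add_distrib]
  have hswap : ∑ j ∈ Finset.range k, ∑ i ∈ Finset.Ico (j + 1) k, w j * 2 ^ (i - j - 1) * a i
      = ∑ i ∈ Finset.range k, ∑ j ∈ Finset.range i, w j * 2 ^ (i - j - 1) * a i := by
    have h1 : ∀ j ∈ Finset.range k, ∑ i ∈ Finset.Ico (j + 1) k, w j * 2 ^ (i - j - 1) * a i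
        = ∑ i ∈ Finset.range k, if j < i then w j * 2 ^ (i - j - 1) * a i else 0 := by
      intro j hj
      rw [← Finset.sum_filter]
      apply Finset.sum_congr _ (fun x _ => rfl)
      ext x
      simp only [Finset.mem_Ico, Finset.mem_filter, Finset.mem_range]
      omega
    rw [Finset.sum_congr rfl h1, Finset.sum_comm]
    refine Finset.sum_congr rfl fun i hi => ?_
    rw [Finset.mem_range] at hi
    rw [← Finset.sum_filter]
    apply Finset.sum_congr _ (fun x _ => rfl)
    ext x
    simp only [Finset.mem_filter, Finset.mem_range]
    omega
  rw [hswap]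
  rw [← Finset.sum_add_distrib]
  refine Finset.sum_congr rfl fun i hi => ?_
  simp only [Wc, Nat.add_mul, Finset.sum_mul]

end Stmt18

namespace Stmt18

def we (j : ℕ) : ℕ := if j % 2 = 0 then 1 else 0
def wo (j : ℕ) : ℕ := if j % 2 = 1 then 1 else 0

lemma sum_pow_rev (i : ℕ) : ∑ j ∈ Finset.range i, 2 ^ (i - j - 1) = 2 ^ i - 1 := by
  induction i with
  | zero => simp
  | succ n ih =>
    rw [Finset.sum_range_succ']
    have h1 : ∀ j ∈ Finset.range n, 2 ^ (n + 1 - (j + 1) - 1) = 2 ^ (n - j - 1) := by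
      intro j hj; congr 1; omega
    rw [Finset.sum_congr rfl h1, ih]
    have : 1 ≤ 2 ^ n := Nat.one_le_two_pow
    have : 2 ^ (n + 1) = 2 * 2 ^ n := by rw [pow_succ]; ring
    have h0 : n + 1 - 0 - 1 = n := by omega
    rw [h0]
    omega

lemma Wc_one (i : ℕ) : Wc (fun _ => 1) i = 2 ^ i := by
  simp only [Wc, one_mul, sum_pow_rev]
  have : 1 ≤ 2 ^ i := Nat.one_le_two_pow
  omega

lemma Wc_add (i : ℕ) : Wc we i + Wc wo i = 2 ^ i := by
  have h : ∀ j, we j + wo j = 1 := by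
    intro j; unfold we wo; split_ifs <;> omega
  simp only [Wc]
  have hsum : ∑ j ∈ Finset.range i, we j * 2 ^ (i - j - 1)
      + ∑ j ∈ Finset.range i, wo j * 2 ^ (i - j - 1) = 2 ^ i - 1 := by
    rw [← Finset.sum_add_distrib, ← sum_pow_rev i]
    refine Finset.sum_congr rfl fun j _ => ?_
    rw [← Nat.add_mul, h j, one_mul]
  have h2 := h i
  have h3 : 1 ≤ 2 ^ i := Nat.one_le_two_pow
  omega

lemma Wc_shift (n : ℕ) : Wc wo (n + 1) = Wc we n := by
  simp only [Wc]
  rw [Finset.sum_range_succ']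
  have h1 : ∀ j ∈ Finset.range n, wo (j + 1) * 2 ^ (n + 1 - (j + 1) - 1) = we j * 2 ^ (n - j - 1) := by
    intro j hj
    have h2 : wo (j + 1) = we j := by unfold we wo; split_ifs <;> omega
    have h3 : n + 1 - (j + 1) - 1 = n - j - 1 := by omega
    rw [h2, h3]
  rw [Finset.sum_congr rfl h1]
  have h4 : wo (n + 1) = we n := by unfold we wo; split_ifs <;> omega
  have h5 : wo 0 = 0 := by simp [wo]
  rw [h4, h5]
  ring

lemma oseq_add (n : ℕ) : oseq n + oseq (n + 1) = 2 ^ (n + 1) := by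
  induction n with
  | zero => rfl
  | succ n ih =>
    show oseq (n + 1) + oseq (n + 2) = 2 ^ (n + 2)
    rw [show oseq (n + 2) = oseq (n + 1) + 2 * oseq n from rfl]
    have : 2 ^ (n + 2) = 2 * 2 ^ (n + 1) := by rw [pow_succ]; ring
    omega

lemma Wc_we_eq (n : ℕ) : Wc we n = oseq n := by
  induction n with
  | zero => simp [Wc, we, oseq]
  | succ n ih =>
    have h1 := Wc_add (n + 1)
    have h2 := Wc_shift n
    have h3 := oseq_add n
    omega

lemma Wc_wo_eq (n : ℕ) : Wc wo n = eseq n := by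
  match n with
  | 0 => simp [Wc, wo, eseq]
  | 1 => simp [Wc, wo, eseq, Finset.filter_singleton]
  | (m + 2) =>
    rw [Wc_shift (m + 1), Wc_we_eq (m + 1)]
    rfl

end Stmt18

namespace Stmt18

def ext (k : ℕ) (m : Fin k → ℕ) (i : ℕ) : ℕ := if h : i < k then m ⟨i, h⟩ else 0

lemma ext_support (k : ℕ) (m : Fin k → ℕ) : ∀ i, k ≤ i → ext k m i = 0 := by
  intro i hi; simp [ext, Nat.not_lt.mpr hi]

lemma ext_restrict (k : ℕ) (a : ℕ → ℕ) (ha : ∀ i, k ≤ i → a i = 0) :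
    ext k (fun i : Fin k => a i) = a := by
  funext i
  by_cases h : i < k
  · simp [ext, h]
  · simp [ext, h, ha i (by omega)]

lemma ext_sum (k : ℕ) (c : ℕ → ℕ) (m : Fin k → ℕ) :
    ∑ i ∈ Finset.range k, c i * ext k m i = ∑ i : Fin k, c i * m i := by
  rw [← Fin.sum_univ_eq_sum_range (fun i => c i * ext k m i)]
  exact Finset.sum_congr rfl fun i _ => by simp [ext, i.isLt]

lemma aOf_support (k : ℕ) (lam : ℕ → ℕ) (h0 : ∀ j, k ≤ j → lam j = 0) :
    ∀ i, k ≤ i → aOf k lam i = 0 := by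
  intro i hi
  simp [aOf, h0 i hi]

lemma fin_sum_aOf (k : ℕ) (c : ℕ → ℕ) (lam : ℕ → ℕ) (_h0 : ∀ j, k ≤ j → lam j = 0) :
    ∑ i : Fin k, c i * aOf k lam i = ∑ i ∈ Finset.range k, c i * aOf k lam i :=
  Fin.sum_univ_eq_sum_range (fun i => c i * aOf k lam i) k

lemma sum_lam_pow (k : ℕ) (a : ℕ → ℕ) :
    ∑ j ∈ Finset.range k, lamOf k a j = ∑ i ∈ Finset.range k, 2 ^ i * a i := by
  have h := weighted_sum k (fun _ => 1) a
  simp only [one_mul] at h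
  rw [h]
  exact Finset.sum_congr rfl fun i _ => by rw [Wc_one]

lemma filter_even (k : ℕ) (lam : ℕ → ℕ) :
    ∑ j ∈ (Finset.range k).filter (fun j => j % 2 = 0), lam j
      = ∑ j ∈ Finset.range k, we j * lam j := by
  rw [Finset.sum_filter]
  refine Finset.sum_congr rfl fun j _ => ?_
  unfold we; split_ifs <;> simp

lemma filter_odd (k : ℕ) (lam : ℕ → ℕ) :
    ∑ j ∈ (Finset.range k).filter (fun j => j % 2 = 1), lam j
      = ∑ j ∈ Finset.range k, wo j * lam j := by
  rw [Finset.sum_filter]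
  refine Finset.sum_congr rfl fun j _ => ?_
  unfold wo; split_ifs <;> simp

lemma sum_lam_even (k : ℕ) (a : ℕ → ℕ) :
    ∑ j ∈ (Finset.range k).filter (fun j => j % 2 = 0), lamOf k a j
      = ∑ i ∈ Finset.range k, oseq i * a i := by
  rw [filter_even, weighted_sum]
  exact Finset.sum_congr rfl fun i _ => by rw [Wc_we_eq]

lemma sum_lam_odd (k : ℕ) (a : ℕ → ℕ) :
    ∑ j ∈ (Finset.range k).filter (fun j => j % 2 = 1), lamOf k a j
      = ∑ i ∈ Finset.range k, eseq i * a i := by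
  rw [filter_odd, weighted_sum]
  exact Finset.sum_congr rfl fun i _ => by rw [Wc_wo_eq]

end Stmt18


open Stmt18 in
/-- Example 21: partitions with `λᵢ ≥ λ_{i+1} + λ_{i+2} + ⋯` are in
bijection with partitions into parts from `{1, 2, 4, …, 2^{k-1}}`; moreover the
two-variable (odd/even weighted) generating function is `∏ᵢ (1 - x^{oᵢ} y^{eᵢ})⁻¹`. -/
theorem stmt_18 (k : ℕ) :
    (∀ n : ℕ, Nonempty (
      {lam : ℕ → ℕ | (∀ j, k ≤ j → lam j = 0) ∧
        (∀ i < k, ∑ j ∈ Finset.Ico (i + 1) k, lam j ≤ lam i) ∧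
        ∑ j ∈ Finset.range k, lam j = n} ≃
      {m : Fin k → ℕ | ∑ i : Fin k, 2 ^ (i : ℕ) * m i = n})) ∧
    (∀ l m : ℕ,
      {lam : ℕ → ℕ | (∀ j, k ≤ j → lam j = 0) ∧
        (∀ i < k, ∑ j ∈ Finset.Ico (i + 1) k, lam j ≤ lam i) ∧
        (∑ j ∈ (Finset.range k).filter (fun j => j % 2 = 0), lam j) = l ∧
        (∑ j ∈ (Finset.range k).filter (fun j => j % 2 = 1), lam j) = m}.ncard =
      {s : Fin k → ℕ |
        (∑ i : Fin k, oseq (i : ℕ) * s i) = l ∧ (∑ i : Fin k, eseq (i : ℕ) * s i) = m}.ncard) := by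
  constructor
  · intro n
    refine ⟨{
      toFun := fun lam => ⟨fun i : Fin k => aOf k lam.1 (i : ℕ), ?_⟩
      invFun := fun m => ⟨lamOf k (ext k m.1), ?_, ?_, ?_⟩
      left_inv := ?_
      right_inv := ?_ }⟩
    · obtain ⟨h0, hs, hn⟩ := lam.2
      show ∑ i : Fin k, 2 ^ (i : ℕ) * aOf k lam.1 (i : ℕ) = n
      rw [fin_sum_aOf k _ lam.1 h0, ← sum_lam_pow, lamOf_aOf k lam.1 h0 hs]
      exact hn
    · intro j hj; simp [lamOf, Nat.not_lt.mpr hj]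
    · intro i hi; exact lamOf_superincr k _ hi
    · rw [sum_lam_pow, ext_sum]; exact m.2
    · rintro ⟨lam, h0, hs, hn⟩
      apply Subtype.ext
      show lamOf k (ext k fun i : Fin k => aOf k lam (i : ℕ)) = lam
      rw [ext_restrict k _ (aOf_support k lam h0)]
      exact lamOf_aOf k lam h0 hs
    · rintro ⟨m, hm⟩
      apply Subtype.ext
      funext i
      show aOf k (lamOf k (ext k m)) (i : ℕ) = m i
      rw [aOf_lamOf k (ext k m) (ext_support k m)]
      simp [ext, i.isLt]
  · intro l m
    rw [← Nat.card_coe_set_eq, ← Nat.card_coe_set_eq]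
    refine Nat.card_congr {
      toFun := fun lam => ⟨fun i : Fin k => aOf k lam.1 (i : ℕ), ?_, ?_⟩
      invFun := fun s => ⟨lamOf k (ext k s.1), ?_, ?_, ?_, ?_⟩
      left_inv := ?_
      right_inv := ?_ }
    · obtain ⟨h0, hs, hl, hm⟩ := lam.2
      show ∑ i : Fin k, oseq (i : ℕ) * aOf k lam.1 (i : ℕ) = l
      rw [fin_sum_aOf k _ lam.1 h0, ← sum_lam_even, lamOf_aOf k lam.1 h0 hs]
      exact hl
    · obtain ⟨h0, hs, hl, hm⟩ := lam.2
      show ∑ i : Fin k, eseq (i : ℕ) * aOf k lam.1 (i : ℕ) = m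
      rw [fin_sum_aOf k _ lam.1 h0, ← sum_lam_odd, lamOf_aOf k lam.1 h0 hs]
      exact hm
    · intro j hj; simp [lamOf, Nat.not_lt.mpr hj]
    · intro i hi; exact lamOf_superincr k _ hi
    · rw [sum_lam_even, ext_sum]; exact s.2.1
    · rw [sum_lam_odd, ext_sum]; exact s.2.2
    · rintro ⟨lam, h0, hs, hl, hm⟩
      apply Subtype.ext
      show lamOf k (ext k fun i : Fin k => aOf k lam (i : ℕ)) = lam
      rw [ext_restrict k _ (aOf_support k lam h0)]
      exact lamOf_aOf k lam h0 hs
    · rintro ⟨s, hs1, hs2⟩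
      apply Subtype.ext
      funext i
      show aOf k (lamOf k (ext k s)) (i : ℕ) = s i
      rw [aOf_lamOf k (ext k s) (ext_support k s)]
      simp [ext, i.isLt]
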